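/- Calculus estimate in the Garsia–Rodemich–Rumsey argument: for every 0 < δ < e^{-2} and every I ≥ 0, ∫₀^δ log(1 + 4I/u²) · du/(2√u) ≤ √δ·( −4·log δ·log(δ² + 4I + 1) − 4·log δ ). -/

import Mathlib

open MeasureTheory Set Filter Topology

theorem stmt19 (δ I : ℝ) (hδ0 : 0 < δ) (hδ : δ < Real.exp (-2)) (hI : 0 ≤ I) :
    ∫ u in Set.Ioc (0 : ℝ) δ, Real.log (1 + 4 * I / u ^ 2) / (2 * Real.sqrt u)
      ≤ Real.sqrt δ *
        (-(4 : ℝ) * Real.log δ * Real.log (δ ^ 2 + 4 * I + 1) - 4 * Real.log δ) := by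
  set L := Real.log (δ ^ 2 + 4 * I + 1) with hLdef
  have hL : 0 ≤ L := Real.log_nonneg (by nlinarith)
  have hlogδ : Real.log δ < -2 := by
    have := Real.log_lt_log hδ0 hδ
    rwa [Real.log_exp] at this
  have hδ1 : δ < 1 := by
    calc δ < Real.exp (-2) := hδ
    _ < 1 := by rw [Real.exp_lt_one_iff]; norm_num
  set g : ℝ → ℝ := fun u => (L - 2 * Real.log u) / (2 * Real.sqrt u) with hg
  -- integrability of g
  have hgint : IntegrableOn g (Set.Ioc (0:ℝ) δ) := by
    have hdom : IntegrableOn (fun u : ℝ => L / 2 * u ^ (-(1:ℝ)/2) + 4 * u ^ (-(3:ℝ)/4))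
        (Set.Ioc (0:ℝ) δ) := by
      have h1 : IntervalIntegrable (fun u : ℝ => u ^ (-(1:ℝ)/2)) volume 0 δ :=
        intervalIntegral.intervalIntegrable_rpow' (by norm_num)
      have h2 : IntervalIntegrable (fun u : ℝ => u ^ (-(3:ℝ)/4)) volume 0 δ :=
        intervalIntegral.intervalIntegrable_rpow' (by norm_num)
      rw [intervalIntegrable_iff_integrableOn_Ioc_of_le hδ0.le] at h1 h2
      exact (h1.const_mul _).add (h2.const_mul _)
    apply hdom.integrable.mono'
    · exact ((measurable_const.sub (Real.measurable_log.const_mul 2)).div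
        (Real.continuous_sqrt.measurable.const_mul 2)).aestronglyMeasurable
    · filter_upwards [ae_restrict_mem measurableSet_Ioc] with u hu
      have hu0 : 0 < u := hu.1
      have hu1 : u < 1 := lt_of_le_of_lt hu.2 hδ1
      have hlogu : Real.log u < 0 := Real.log_neg hu0 hu1
      have hsq : Real.sqrt u = u ^ ((1:ℝ)/2) := Real.sqrt_eq_rpow u
      have hsqpos : 0 < Real.sqrt u := Real.sqrt_pos.2 hu0
      have hgnn : 0 ≤ g u := by
        apply div_nonneg (by linarith) (by linarith)
      rw [Real.norm_eq_abs, abs_of_nonneg hgnn]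
      have hlogbound : -Real.log u ≤ 4 * u ^ (-(1:ℝ)/4) := by
        have := Real.log_le_rpow_div (x := u⁻¹) (ε := (1:ℝ)/4) (by positivity) (by norm_num)
        rw [Real.log_inv, Real.inv_rpow hu0.le, ← Real.rpow_neg hu0.le] at this
        calc -Real.log u ≤ u ^ (-((1:ℝ)/4)) / ((1:ℝ)/4) := this
        _ = 4 * u ^ (-(1:ℝ)/4) := by rw [neg_div]; ring
      have key : g u = L / 2 * u ^ (-(1:ℝ)/2) + (-Real.log u) * u ^ (-(1:ℝ)/2) := by
        rw [hg]
        have : u ^ (-(1:ℝ)/2) = (Real.sqrt u)⁻¹ := by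
          rw [hsq, ← Real.rpow_neg hu0.le, neg_div]
        rw [this]
        field_simp
        ring
      rw [key]
      have h34 : u ^ (-(1:ℝ)/4) * u ^ (-(1:ℝ)/2) = u ^ (-(3:ℝ)/4) := by
        rw [← Real.rpow_add hu0]; norm_num
      have : (-Real.log u) * u ^ (-(1:ℝ)/2) ≤ 4 * u ^ (-(3:ℝ)/4) := by
        calc (-Real.log u) * u ^ (-(1:ℝ)/2) ≤ (4 * u ^ (-(1:ℝ)/4)) * u ^ (-(1:ℝ)/2) := by
              apply mul_le_mul_of_nonneg_right hlogbound (by positivity)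
        _ = 4 * u ^ (-(3:ℝ)/4) := by rw [mul_assoc, h34]
      linarith
  -- value of ∫ g
  have hgval : ∫ u in Set.Ioc (0:ℝ) δ, g u = Real.sqrt δ * (L - 2 * Real.log δ + 4) := by
    rw [← intervalIntegral.integral_of_le hδ0.le]
    have hderiv : ∀ x ∈ Set.Ioo (0:ℝ) δ, HasDerivAt
        (fun u => Real.sqrt u * (L - 2 * Real.log u + 4)) (g x) x := by
      intro x hx
      have hx0 : 0 < x := hx.1
      have hsx : 0 < Real.sqrt x := Real.sqrt_pos.2 hx0
      have hs := Real.hasDerivAt_sqrt hx0.ne'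
      have hl : HasDerivAt (fun u => L - 2 * Real.log u + 4) (-(2 * x⁻¹)) x := by
        have := ((Real.hasDerivAt_log hx0.ne').const_mul 2).const_sub L
        simpa using this.add_const 4
      have : HasDerivAt (fun u => Real.sqrt u * (L - 2 * Real.log u + 4))
          (1 / (2 * Real.sqrt x) * (L - 2 * Real.log x + 4) + Real.sqrt x * -(2 * x⁻¹)) x :=
        hs.mul hl
      convert this using 1
      have hxx : Real.sqrt x * Real.sqrt x = x := Real.mul_self_sqrt hx0.le
      rw [hg]
      field_simp
      nlinarith [hxx]
    have ha : Tendsto (fun u => Real.sqrt u * (L - 2 * Real.log u + 4)) (𝓝[>] 0) (𝓝 0) := by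
      have t1 : Tendsto (fun u : ℝ => Real.log u * u ^ ((1:ℝ)/2)) (𝓝[>] 0) (𝓝 0) :=
        tendsto_log_mul_rpow_nhdsGT_zero (by norm_num)
      have t1' : Tendsto (fun u : ℝ => Real.log u * Real.sqrt u) (𝓝[>] 0) (𝓝 0) := by
        apply t1.congr'
        filter_upwards [self_mem_nhdsWithin] with u hu
        rw [Real.sqrt_eq_rpow]
      have t2 : Tendsto (fun u : ℝ => Real.sqrt u) (𝓝[>] 0) (𝓝 0) := by
        have := (Real.continuous_sqrt.tendsto 0).mono_left (nhdsWithin_le_nhds (s := Set.Ioi 0))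
        simpa using this
      have := (t2.mul_const (L + 4)).sub (t1'.const_mul 2)
      simp only [mul_zero, zero_mul, sub_zero, zero_sub, neg_zero] at this
      convert this using 2 with u
      ring
    have hb : Tendsto (fun u => Real.sqrt u * (L - 2 * Real.log u + 4)) (𝓝[<] δ)
        (𝓝 (Real.sqrt δ * (L - 2 * Real.log δ + 4))) := by
      have hc : ContinuousAt (fun u => Real.sqrt u * (L - 2 * Real.log u + 4)) δ := by
        apply Real.continuous_sqrt.continuousAt.mul
        exact (continuousAt_const.sub ((Real.continuousAt_log hδ0.ne').const_mul 2)).add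
          continuousAt_const
      exact hc.tendsto.mono_left nhdsWithin_le_nhds
    have hint : IntervalIntegrable g volume 0 δ := by
      rwa [intervalIntegrable_iff_integrableOn_Ioc_of_le hδ0.le]
    rw [intervalIntegral.integral_eq_sub_of_hasDerivAt_of_tendsto hδ0 hderiv hint ha hb]
    ring
  -- pointwise bound
  have hmono : ∫ u in Set.Ioc (0 : ℝ) δ, Real.log (1 + 4 * I / u ^ 2) / (2 * Real.sqrt u)
      ≤ ∫ u in Set.Ioc (0:ℝ) δ, g u := by
    apply integral_mono_of_nonneg
    · filter_upwards [ae_restrict_mem measurableSet_Ioc] with u hu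
      have hu0 : 0 < u := hu.1
      have : (0:ℝ) ≤ 4 * I / u ^ 2 := by positivity
      have hsqpos : 0 < Real.sqrt u := Real.sqrt_pos.2 hu0
      exact div_nonneg (Real.log_nonneg (by linarith)) (by linarith)
    · exact hgint.integrable
    · filter_upwards [ae_restrict_mem measurableSet_Ioc] with u hu
      have hu0 : 0 < u := hu.1
      have hsqpos : 0 < Real.sqrt u := Real.sqrt_pos.2 hu0
      apply div_le_div_of_nonneg_right ?_ (by linarith)
      have heq : 1 + 4 * I / u ^ 2 = (u ^ 2 + 4 * I) / u ^ 2 := by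
        field_simp
      rw [heq, Real.log_div (by positivity) (by positivity)]
      have hlp : Real.log (u ^ 2) = 2 * Real.log u := by
        rw [Real.log_pow]; push_cast; ring
      have : Real.log (u ^ 2 + 4 * I) ≤ L := by
        apply Real.log_le_log (by positivity)
        nlinarith [hu.2, sq_nonneg u, sq_nonneg δ]
      linarith
  calc ∫ u in Set.Ioc (0 : ℝ) δ, Real.log (1 + 4 * I / u ^ 2) / (2 * Real.sqrt u)
      ≤ ∫ u in Set.Ioc (0:ℝ) δ, g u := hmono
  _ = Real.sqrt δ * (L - 2 * Real.log δ + 4) := hgval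
  _ ≤ Real.sqrt δ * (-(4 : ℝ) * Real.log δ * L - 4 * Real.log δ) := by
      apply mul_le_mul_of_nonneg_left ?_ (Real.sqrt_nonneg δ)
      nlinarith [mul_nonneg hL (show (0:ℝ) ≤ -4 * Real.log δ - 1 by linarith)]
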